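/- Let G be an FC group. Then the commutator subgroup G' of G is a torsion group. -/

import Mathlib

open Subgroup
open scoped commutatorElement

/-- In an FC group, the centralizer of a single element has finite index
(orbit-stabilizer for the conjugation action). -/
lemma aux_centralizer_fi {G : Type*} [Group G]
    (hFC : ∀ x : G, (Set.range fun h : G => h * x * h⁻¹).Finite) (x : G) :
    (Subgroup.centralizer {x}).FiniteIndex := by
  have horb : (MulAction.orbit (ConjAct G) x).Finite := by
    apply (hFC x).subset
    rintro y ⟨h, rfl⟩
    exact ⟨ConjAct.ofConjAct h, (ConjAct.smul_def h x).symm⟩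
  have : Finite (ConjAct G ⧸ MulAction.stabilizer (ConjAct G) x) := by
    have := horb.to_subtype
    exact Finite.of_equiv _ (MulAction.orbitEquivQuotientStabilizer (ConjAct G) x)
  have hst : (MulAction.stabilizer (ConjAct G) x).FiniteIndex :=
    Subgroup.finiteIndex_of_finite_quotient
  rw [Subgroup.centralizer_eq_comap_stabilizer]
  refine ⟨?_⟩
  have hc := Subgroup.index_comap_of_surjective (H := MulAction.stabilizer (ConjAct G) x)
    (f := (ConjAct.toConjAct : G ≃* ConjAct G).toMonoidHom) (MulEquiv.surjective _)
  exact fun h0 => hst.index_ne_zero (hc.symm.trans h0)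

/-- In an FC group, the centralizer of a finite set has finite index. -/
lemma aux_centralizer_finset_fi {G : Type*} [Group G]
    (hFC : ∀ x : G, (Set.range fun h : G => h * x * h⁻¹).Finite) (s : Finset G) :
    (Subgroup.centralizer (s : Set G)).FiniteIndex := by
  classical
  induction s using Finset.induction with
  | empty =>
      have : Subgroup.centralizer ((∅ : Finset G) : Set G) = ⊤ := by
        rw [Subgroup.centralizer_eq_top_iff_subset]; simp
      rw [this]; infer_instance
  | @insert a s ha ih =>
      have : Subgroup.centralizer ((insert a s : Finset G) : Set G) =
          Subgroup.centralizer {a} ⊓ Subgroup.centralizer (s : Set G) := by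
        ext g
        simp only [Subgroup.mem_centralizer_iff, Subgroup.mem_inf, Finset.coe_insert,
          Set.mem_insert_iff, Set.mem_singleton_iff, forall_eq, SetLike.mem_coe]
        constructor
        · exact fun h => ⟨h a (Or.inl rfl), fun y hy => h y (Or.inr hy)⟩
        · rintro ⟨h1, h2⟩ y (rfl | hy)
          · exact h1
          · exact h2 y hy
      rw [this]
      haveI := aux_centralizer_fi hFC a
      haveI := ih
      infer_instance

lemma aux_comm_central_right {G : Type*} [Group G] {a b w : G}
    (hw : w ∈ Subgroup.center G) : ⁅a, b * w⁆ = ⁅a, b⁆ := by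
  rw [Subgroup.mem_center_iff] at hw
  simp only [commutatorElement_def, mul_inv_rev]
  calc a * (b * w) * a⁻¹ * (w⁻¹ * b⁻¹)
      = a * b * (w * a⁻¹) * w⁻¹ * b⁻¹ := by group
    _ = a * b * (a⁻¹ * w) * w⁻¹ * b⁻¹ := by rw [hw a⁻¹]
    _ = a * b * a⁻¹ * b⁻¹ := by group

lemma aux_comm_central_left {G : Type*} [Group G] {a b z : G}
    (hz : z ∈ Subgroup.center G) : ⁅a * z, b⁆ = ⁅a, b⁆ := by
  rw [Subgroup.mem_center_iff] at hz
  simp only [commutatorElement_def, mul_inv_rev]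
  calc a * z * b * (z⁻¹ * a⁻¹) * b⁻¹
      = a * (z * b) * z⁻¹ * a⁻¹ * b⁻¹ := by group
    _ = a * (b * z) * z⁻¹ * a⁻¹ * b⁻¹ := by rw [← hz b]
    _ = a * b * a⁻¹ * b⁻¹ := by group

lemma aux_comm_central {G : Type*} [Group G] {a b z w : G}
    (hz : z ∈ Subgroup.center G) (hw : w ∈ Subgroup.center G) :
    ⁅a * z, b * w⁆ = ⁅a, b⁆ := by
  rw [aux_comm_central_left hz, aux_comm_central_right hw]

/-- If the center has finite index, there are only finitely many commutators. -/
lemma aux_finite_commutatorSet {G : Type*} [Group G]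
    [h : (Subgroup.center G).FiniteIndex] : Finite (commutatorSet G) := by
  have hq : Finite (G ⧸ Subgroup.center G) := inferInstance
  have hsub : commutatorSet G ⊆
      Set.range (fun p : (G ⧸ Subgroup.center G) × (G ⧸ Subgroup.center G) =>
        ⁅p.1.out, p.2.out⁆) := by
    rintro x ⟨a, b, rfl⟩
    refine ⟨(QuotientGroup.mk a, QuotientGroup.mk b), ?_⟩
    have ha : ((QuotientGroup.mk a : G ⧸ Subgroup.center G).out)⁻¹ * a ∈
        Subgroup.center G := by
      rw [← QuotientGroup.eq]
      simp [QuotientGroup.out_eq']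
    have hb : ((QuotientGroup.mk b : G ⧸ Subgroup.center G).out)⁻¹ * b ∈
        Subgroup.center G := by
      rw [← QuotientGroup.eq]
      simp [QuotientGroup.out_eq']
    have key := aux_comm_central (a := (QuotientGroup.mk a : G ⧸ Subgroup.center G).out)
      (b := (QuotientGroup.mk b : G ⧸ Subgroup.center G).out) ha hb
    simp only [mul_inv_cancel_left] at key
    exact key.symm
  exact ((Set.finite_range _).subset hsub).to_subtype

theorem stmt_3 {G : Type*} [Group G]
    (hFC : ∀ x : G, (Set.range fun h : G => h * x * h⁻¹).Finite) :
    Monoid.IsTorsion ↥(commutator G) := by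
  classical
  intro g
  -- it suffices to show `↑g : G` has finite order
  suffices h : IsOfFinOrder (g : G) by
    rw [isOfFinOrder_iff_pow_eq_one] at h ⊢
    obtain ⟨n, hn, h⟩ := h
    exact ⟨n, hn, Subtype.ext (by push_cast [h]; rfl)⟩
  have hg : (g : G) ∈ Submonoid.closure (commutatorSet G ∪ (commutatorSet G)⁻¹) := by
    rw [← Subgroup.closure_toSubmonoid, ← commutator_eq_closure]
    exact g.2
  obtain ⟨l, hl, hprod⟩ := Submonoid.exists_list_of_mem_closure hg
  have hl' : ∀ x ∈ l, x ∈ commutatorSet G := by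
    intro x hx
    rcases hl x hx with h | h
    · exact h
    · obtain ⟨a, b, hab⟩ := Set.mem_inv.mp h
      exact ⟨b, a, by rw [← commutatorElement_inv, hab, inv_inv]⟩
  -- choose commutator decompositions
  let f : G → G × G := fun x =>
    if h : x ∈ commutatorSet G then (h.choose, h.choose_spec.choose) else (1, 1)
  have hf : ∀ x (h : x ∈ commutatorSet G), ⁅(f x).1, (f x).2⁆ = x := by
    intro x h
    simp only [f, dif_pos h]
    exact h.choose_spec.choose_spec
  let S : Finset G := l.toFinset.image (fun x => (f x).1) ∪ l.toFinset.image fun x => (f x).2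
  let H : Subgroup G := Subgroup.closure (S : Set G)
  haveI hCfi : (Subgroup.centralizer (S : Set G)).FiniteIndex :=
    aux_centralizer_finset_fi hFC S
  haveI : (Subgroup.center ↥H).FiniteIndex := by
    haveI : ((Subgroup.centralizer (S : Set G)).subgroupOf H).FiniteIndex :=
      Subgroup.instFiniteIndex_subgroupOf _ _
    refine Subgroup.finiteIndex_of_le (H := (Subgroup.centralizer (S : Set G)).subgroupOf H) ?_
    rintro ⟨h, hhH⟩ hmem
    rw [Subgroup.mem_subgroupOf] at hmem
    have hle : H ≤ Subgroup.centralizer {h} := by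
      refine (Subgroup.closure_le _).mpr fun s hs => ?_
      rw [SetLike.mem_coe, Subgroup.mem_centralizer_singleton_iff]
      exact hmem s hs
    rw [Subgroup.mem_center_iff]
    intro k
    exact Subtype.ext (Subgroup.mem_centralizer_singleton_iff.mp (hle k.2))
  haveI : Finite (commutatorSet ↥H) := aux_finite_commutatorSet
  -- Schur's theorem
  haveI : Finite (_root_.commutator ↥H) := inferInstance
  -- the image of the commutator subgroup of H in G
  set K : Subgroup G := (_root_.commutator ↥H).map H.subtype with hK
  haveI : Finite ↥K := by
    have : (K : Set G).Finite := Set.Finite.image _ (Set.toFinite _)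
    exact this.to_subtype
  have hgK : (g : G) ∈ K := by
    rw [← hprod]
    refine Subgroup.list_prod_mem _ fun x hx => ?_
    have hx' := hl' x hx
    have ha : (f x).1 ∈ H :=
      Subgroup.subset_closure (by
        simp only [S, Finset.coe_union, Set.mem_union, Finset.coe_image, Set.mem_image]
        exact Or.inl ⟨x, by simpa using hx, rfl⟩)
    have hb : (f x).2 ∈ H :=
      Subgroup.subset_closure (by
        simp only [S, Finset.coe_union, Set.mem_union, Finset.coe_image, Set.mem_image]
        exact Or.inr ⟨x, by simpa using hx, rfl⟩)
    refine ⟨⁅(⟨(f x).1, ha⟩ : ↥H), (⟨(f x).2, hb⟩ : ↥H)⁆,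
      Subgroup.commutator_mem_commutator (Subgroup.mem_top _) (Subgroup.mem_top _), ?_⟩
    simp only [commutatorElement_def, Subgroup.coe_subtype, Subgroup.coe_mul, Subgroup.coe_inv]
    exact hf x hx'
  have := isTorsion_of_finite (G := ↥K) ⟨g, hgK⟩
  rw [isOfFinOrder_iff_pow_eq_one] at this ⊢
  obtain ⟨n, hn, h⟩ := this
  exact ⟨n, hn, by simpa using congrArg (Subtype.val) h⟩
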